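/- Let λ = (α|β) be a partition of length at most n, and m ≥ 0. Then Π_{u ∈ (α+m|β)} (n + c(u)) = Π_{u ∈ (α|β+m)} (m + n + c(u)), where the products are over cells of the respective Young diagrams and c(u) is the content. -/

import Mathlib

open Finset

/-- A cell of the `i`-th hook determines `i` as the min of its coordinates. -/
private lemma hook_min {μ : YoungDiagram} {i : ℕ} {u : ℕ × ℕ}
    (hu : u ∈ (Ico i (μ.rowLen i)).image (fun j => (i, j)) ∪
      (Ico (i + 1) (μ.colLen i)).image (fun j => (j, i))) :
    min u.1 u.2 = i := by
  simp only [Finset.mem_union, Finset.mem_image, Finset.mem_Ico] at hu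
  rcases hu with ⟨j, ⟨h1, _⟩, rfl⟩ | ⟨j, ⟨h1, _⟩, rfl⟩ <;> simp <;> omega

/-- Hook decomposition of a product over the cells of a Young diagram with
Durfee (Frobenius) rank `r`. -/
private lemma hook_decomp (μ : YoungDiagram) (r : ℕ)
    (hr : ∀ i, (i, i) ∈ μ ↔ i < r) (f : ℕ × ℕ → ℤ) :
    ∏ u ∈ μ.cells, f u =
      ∏ i ∈ range r,
        ((∏ j ∈ Ico i (μ.rowLen i), f (i, j)) *
         (∏ j ∈ Ico (i + 1) (μ.colLen i), f (j, i))) := by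
  have hcells : μ.cells =
      (range r).biUnion (fun i =>
        (Ico i (μ.rowLen i)).image (fun j => (i, j)) ∪
        (Ico (i + 1) (μ.colLen i)).image (fun j => (j, i))) := by
    ext u
    obtain ⟨a, b⟩ := u
    simp only [Finset.mem_biUnion, Finset.mem_range, Finset.mem_union, Finset.mem_image,
      Finset.mem_Ico, YoungDiagram.mem_cells, Prod.mk.injEq]
    constructor
    · intro hab
      refine ⟨min a b, ?_, ?_⟩
      · rw [← hr]
        exact μ.up_left_mem (min_le_left a b) (min_le_right a b) hab
      · rcases le_or_gt a b with h | h
        · rw [min_eq_left h]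
          exact Or.inl ⟨b, ⟨h, YoungDiagram.mem_iff_lt_rowLen.mp hab⟩, rfl, rfl⟩
        · rw [min_eq_right h.le]
          exact Or.inr ⟨a, ⟨h, YoungDiagram.mem_iff_lt_colLen.mp hab⟩, rfl, rfl⟩
    · rintro ⟨i, _, ⟨j, ⟨h1, h2⟩, rfl, rfl⟩ | ⟨j, ⟨h1, h2⟩, rfl, rfl⟩⟩
      · exact YoungDiagram.mem_iff_lt_rowLen.mpr h2
      · exact YoungDiagram.mem_iff_lt_colLen.mpr h2
  rw [hcells, Finset.prod_biUnion]
  · refine Finset.prod_congr rfl fun i _ => ?_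
    rw [Finset.prod_union, Finset.prod_image (fun x _ y _ h => by
        simpa using congrArg Prod.snd h),
      Finset.prod_image (fun x _ y _ h => by simpa using congrArg Prod.fst h)]
    rw [Finset.disjoint_left]
    rintro u hu hu'
    simp only [Finset.mem_image, Finset.mem_Ico] at hu hu'
    obtain ⟨j, ⟨h1, _⟩, rfl⟩ := hu
    obtain ⟨k, ⟨h2, _⟩, he⟩ := hu'
    simp only [Prod.mk.injEq] at he
    omega
  · intro i _ i' _ hne
    simp only [Function.onFun]
    rw [Finset.disjoint_left]
    intro u hu hu'
    exact hne ((hook_min hu).symm.trans (hook_min hu'))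

private lemma desc_prod (c : ℤ) (k : ℕ) :
    ∏ t ∈ range k, (c - 1 - t) = ∏ t ∈ range k, (c - k + t) := by
  rw [← Finset.prod_range_reflect (fun t => c - (k : ℤ) + t) k]
  refine Finset.prod_congr rfl fun j hj => ?_
  rw [Finset.mem_range] at hj
  have : ((k - 1 - j : ℕ) : ℤ) = (k : ℤ) - 1 - j := by omega
  rw [this]; ring

private lemma split_prod (c : ℤ) (B K : ℕ) :
    ∏ t ∈ range (B + K), (c - B + t) =
      (∏ t ∈ range K, (c + t)) * ∏ t ∈ range B, (c - B + t) := by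
  rw [Finset.prod_range_add, mul_comm]
  congr 1
  exact Finset.prod_congr rfl fun t _ => by push_cast; ring

private lemma hook_eq (n m A B : ℕ) :
    (∏ t ∈ range (A + m + 1), ((n : ℤ) + t)) *
        (∏ t ∈ range B, ((n : ℤ) - 1 - t)) =
      (∏ t ∈ range (A + 1), ((m : ℤ) + n + t)) *
        (∏ t ∈ range (B + m), ((m : ℤ) + n - 1 - t)) := by
  rw [desc_prod ((n : ℤ)) B, desc_prod ((m : ℤ) + n) (B + m)]
  rw [← split_prod (n : ℤ) B (A + m + 1), ← split_prod ((m : ℤ) + n) (B + m) (A + 1)]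
  have e2 : B + (A + m + 1) = (B + m) + (A + 1) := by ring
  rw [e2]
  refine Finset.prod_congr rfl fun t _ => by push_cast; ring

/-- Let λ = (α|β) be a partition of length at most n and m ≥ 0, and let
μ₁ = (α+m|β) and μ₂ = (α|β+m) (Frobenius coordinates, 0-indexed as in the hypotheses).
Then Π_{u ∈ (α+m|β)} (n + c(u)) = Π_{u ∈ (α|β+m)} (m + n + c(u)). -/
theorem prod_n_add_content_eq (n m r : ℕ) (α β : ℕ → ℕ) (μ μ₁ μ₂ : YoungDiagram)
    (hlen : μ.colLen 0 ≤ n)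
    (hr : ∀ i : ℕ, (i, i) ∈ μ ↔ i < r)
    (hα : ∀ i < r, μ.rowLen i = α i + i + 1)
    (hβ : ∀ i < r, μ.colLen i = β i + i + 1)
    (hr₁ : ∀ i : ℕ, (i, i) ∈ μ₁ ↔ i < r)
    (hα₁ : ∀ i < r, μ₁.rowLen i = (α i + m) + i + 1)
    (hβ₁ : ∀ i < r, μ₁.colLen i = β i + i + 1)
    (hr₂ : ∀ i : ℕ, (i, i) ∈ μ₂ ↔ i < r)
    (hα₂ : ∀ i < r, μ₂.rowLen i = α i + i + 1)
    (hβ₂ : ∀ i < r, μ₂.colLen i = (β i + m) + i + 1) :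
    ∏ u ∈ μ₁.cells, ((n : ℤ) + ((u.2 : ℤ) - (u.1 : ℤ))) =
      ∏ u ∈ μ₂.cells, ((m : ℤ) + (n : ℤ) + ((u.2 : ℤ) - (u.1 : ℤ))) := by
  rw [hook_decomp μ₁ r hr₁ (fun u => (n : ℤ) + ((u.2 : ℤ) - (u.1 : ℤ))),
    hook_decomp μ₂ r hr₂ (fun u => (m : ℤ) + (n : ℤ) + ((u.2 : ℤ) - (u.1 : ℤ)))]
  refine Finset.prod_congr rfl fun i hi => ?_
  rw [Finset.mem_range] at hi
  rw [hα₁ i hi, hβ₁ i hi, hα₂ i hi, hβ₂ i hi]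
  simp only []
  have harm1 : ∏ j ∈ Ico i (α i + m + i + 1), ((n : ℤ) + ((j : ℤ) - (i : ℤ))) =
      ∏ t ∈ range (α i + m + 1), ((n : ℤ) + t) := by
    rw [Finset.prod_Ico_eq_prod_range]
    have h : α i + m + i + 1 - i = α i + m + 1 := by omega
    rw [h]
    exact Finset.prod_congr rfl fun t _ => by push_cast; ring
  have hleg1 : ∏ j ∈ Ico (i + 1) (β i + i + 1), ((n : ℤ) + ((i : ℤ) - (j : ℤ))) =
      ∏ t ∈ range (β i), ((n : ℤ) - 1 - t) := by
    rw [Finset.prod_Ico_eq_prod_range]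
    have h : β i + i + 1 - (i + 1) = β i := by omega
    rw [h]
    exact Finset.prod_congr rfl fun t _ => by push_cast; ring
  have harm2 : ∏ j ∈ Ico i (α i + i + 1), ((m : ℤ) + (n : ℤ) + ((j : ℤ) - (i : ℤ))) =
      ∏ t ∈ range (α i + 1), ((m : ℤ) + n + t) := by
    rw [Finset.prod_Ico_eq_prod_range]
    have h : α i + i + 1 - i = α i + 1 := by omega
    rw [h]
    exact Finset.prod_congr rfl fun t _ => by push_cast; ring
  have hleg2 : ∏ j ∈ Ico (i + 1) (β i + m + i + 1), ((m : ℤ) + (n : ℤ) + ((i : ℤ) - (j : ℤ))) =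
      ∏ t ∈ range (β i + m), ((m : ℤ) + n - 1 - t) := by
    rw [Finset.prod_Ico_eq_prod_range]
    have h : β i + m + i + 1 - (i + 1) = β i + m := by omega
    rw [h]
    exact Finset.prod_congr rfl fun t _ => by push_cast; ring
  rw [harm1, hleg1, harm2, hleg2]
  exact hook_eq n m (α i) (β i)
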